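/- arXiv:hep-th/0211225 — 2 statements merged into one kernel-verified Lean document; each statement's English description precedes it below -/
import Mathlib

section
/- Factorization equivalence (commutative case): Let B₁, B₂ be k×k complex matrices, I a k×N complex matrix, J an N×k complex matrix, and let Δ† (z₁,z₂) be the 2k×(N+2k) matrix with block rows (I, B₂+z₂, B₁+z₁) and (J†, −B₁†−z̄₁, B₂†+z̄₂) for complex scalars z₁, z₂. Then Δ†Δ is of the block form diag(f⁻¹, f⁻¹) for some k×k matrix f⁻¹ (i.e., the off-diagonal k×k blocks of Δ†Δ vanish and the two diagonal blocks are equal) for all z₁, z₂ ∈ ℂ, if and only if the ADHM equations hold: [B₁,B₁†] + [B₂,B₂†] + II† − J†J = 0 and [B₁,B₂] + IJ = 0. -/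
open Matrix

/-- The operator Δ†(z₁,z₂) of the commutative ADHM construction, with block rows
(I, B₂+z₂, B₁+z₁) and (J†, −B₁†−z̄₁, B₂†+z̄₂). -/
noncomputable def Ddag (k N : ℕ) (B1 B2 : Matrix (Fin k) (Fin k) ℂ)
    (Imat : Matrix (Fin k) (Fin N) ℂ) (Jmat : Matrix (Fin N) (Fin k) ℂ)
    (z1 z2 : ℂ) : Matrix (Fin k ⊕ Fin k) (Fin N ⊕ (Fin k ⊕ Fin k)) ℂ :=
  Matrix.of fun i j =>
    match i, j with
    | Sum.inl i, Sum.inl j => Imat i j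
    | Sum.inl i, Sum.inr (Sum.inl j) => (B2 + z2 • 1) i j
    | Sum.inl i, Sum.inr (Sum.inr j) => (B1 + z1 • 1) i j
    | Sum.inr i, Sum.inl j => Jmatᴴ i j
    | Sum.inr i, Sum.inr (Sum.inl j) => (-B1ᴴ - (starRingEnd ℂ z1) • 1) i j
    | Sum.inr i, Sum.inr (Sum.inr j) => (B2ᴴ + (starRingEnd ℂ z2) • 1) i j

section Aux

variable (k N : ℕ) (B1 B2 : Matrix (Fin k) (Fin k) ℂ)
    (Imat : Matrix (Fin k) (Fin N) ℂ) (Jmat : Matrix (Fin N) (Fin k) ℂ) (z1 z2 : ℂ)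

lemma Ddag_eq_fromBlocks : Ddag k N B1 B2 Imat Jmat z1 z2 =
    fromBlocks Imat (fromCols (B2 + z2 • 1) (B1 + z1 • 1)) Jmatᴴ
      (fromCols (-B1ᴴ - (starRingEnd ℂ z1) • 1) (B2ᴴ + (starRingEnd ℂ z2) • 1)) := by
  ext i j
  rcases i with i | i <;> rcases j with j | (j | j) <;> rfl

lemma Ddag_blk12 :
    (Ddag k N B1 B2 Imat Jmat z1 z2 * (Ddag k N B1 B2 Imat Jmat z1 z2)ᴴ).toBlocks₁₂ =
    Imat * Jmat + (B1 * B2 - B2 * B1) := by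
  simp only [Ddag_eq_fromBlocks, fromBlocks_conjTranspose,
    conjTranspose_fromCols_eq_fromRows_conjTranspose,
    fromBlocks_multiply, toBlocks_fromBlocks₁₂, fromCols_mul_fromRows]
  simp only [conjTranspose_sub, conjTranspose_neg, conjTranspose_add, conjTranspose_conjTranspose,
    conjTranspose_smul, conjTranspose_one, RCLike.star_def, Complex.conj_conj]
  simp only [mul_add, add_mul, mul_sub, sub_mul, mul_neg, neg_mul, smul_mul_assoc,
    mul_smul_comm, mul_one, one_mul, smul_smul, smul_add]
  module

lemma Ddag_blk21 :
    (Ddag k N B1 B2 Imat Jmat z1 z2 * (Ddag k N B1 B2 Imat Jmat z1 z2)ᴴ).toBlocks₂₁ =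
    Jmatᴴ * Imatᴴ + (B2ᴴ * B1ᴴ - B1ᴴ * B2ᴴ) := by
  simp only [Ddag_eq_fromBlocks, fromBlocks_conjTranspose,
    conjTranspose_fromCols_eq_fromRows_conjTranspose,
    fromBlocks_multiply, toBlocks_fromBlocks₂₁, fromCols_mul_fromRows]
  simp only [conjTranspose_sub, conjTranspose_neg, conjTranspose_add, conjTranspose_conjTranspose,
    conjTranspose_smul, conjTranspose_one, RCLike.star_def, Complex.conj_conj]
  simp only [mul_add, add_mul, mul_sub, sub_mul, mul_neg, neg_mul, smul_mul_assoc,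
    mul_smul_comm, mul_one, one_mul, smul_smul, smul_add]
  module

lemma Ddag_blk_diff :
    (Ddag k N B1 B2 Imat Jmat z1 z2 * (Ddag k N B1 B2 Imat Jmat z1 z2)ᴴ).toBlocks₁₁ -
    (Ddag k N B1 B2 Imat Jmat z1 z2 * (Ddag k N B1 B2 Imat Jmat z1 z2)ᴴ).toBlocks₂₂ =
    (B1 * B1ᴴ - B1ᴴ * B1) + (B2 * B2ᴴ - B2ᴴ * B2) + Imat * Imatᴴ - Jmatᴴ * Jmat := by
  simp only [Ddag_eq_fromBlocks, fromBlocks_conjTranspose,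
    conjTranspose_fromCols_eq_fromRows_conjTranspose,
    fromBlocks_multiply, toBlocks_fromBlocks₁₁, toBlocks_fromBlocks₂₂, fromCols_mul_fromRows]
  simp only [conjTranspose_sub, conjTranspose_neg, conjTranspose_add, conjTranspose_conjTranspose,
    conjTranspose_smul, conjTranspose_one, RCLike.star_def, Complex.conj_conj]
  simp only [mul_add, add_mul, mul_sub, sub_mul, mul_neg, neg_mul, neg_neg, smul_mul_assoc,
    mul_smul_comm, mul_one, one_mul, smul_smul, smul_add, smul_neg, smul_sub]
  module

end Aux

/-- Factorization equivalence (commutative case): Δ†Δ is of the form diag(f⁻¹,f⁻¹) for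
all z₁,z₂ iff the ADHM equations μ_r = 0 and μ_c = 0 hold. -/
theorem stmt8 (k N : ℕ) (B1 B2 : Matrix (Fin k) (Fin k) ℂ)
    (Imat : Matrix (Fin k) (Fin N) ℂ) (Jmat : Matrix (Fin N) (Fin k) ℂ) :
    (∀ z1 z2 : ℂ,
      (Ddag k N B1 B2 Imat Jmat z1 z2 * (Ddag k N B1 B2 Imat Jmat z1 z2)ᴴ).toBlocks₁₂ = 0 ∧
      (Ddag k N B1 B2 Imat Jmat z1 z2 * (Ddag k N B1 B2 Imat Jmat z1 z2)ᴴ).toBlocks₂₁ = 0 ∧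
      (Ddag k N B1 B2 Imat Jmat z1 z2 * (Ddag k N B1 B2 Imat Jmat z1 z2)ᴴ).toBlocks₁₁ =
        (Ddag k N B1 B2 Imat Jmat z1 z2 * (Ddag k N B1 B2 Imat Jmat z1 z2)ᴴ).toBlocks₂₂)
    ↔ ((B1 * B1ᴴ - B1ᴴ * B1) + (B2 * B2ᴴ - B2ᴴ * B2) + Imat * Imatᴴ - Jmatᴴ * Jmat = 0 ∧
       (B1 * B2 - B2 * B1) + Imat * Jmat = 0) := by
  constructor
  · intro h
    obtain ⟨h12, _, hdiag⟩ := h 0 0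
    rw [Ddag_blk12] at h12
    constructor
    · rw [← Ddag_blk_diff k N B1 B2 Imat Jmat 0 0, hdiag, sub_self]
    · rw [← h12]; abel
  · rintro ⟨h1, h2⟩ z1 z2
    refine ⟨?_, ?_, ?_⟩
    · rw [Ddag_blk12, ← h2]; abel
    · rw [Ddag_blk21]
      have := congrArg conjTranspose h2
      simp only [conjTranspose_add, conjTranspose_sub, conjTranspose_mul, conjTranspose_zero] at this
      rw [← this]; abel
    · have hd := Ddag_blk_diff k N B1 B2 Imat Jmat z1 z2
      rw [h1] at hd
      exact sub_eq_zero.mp hd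
end

section
/- Courant–Fischer max-min: Let O be a self-adjoint operator on an n-dimensional complex inner product space with eigenvalues λ₀ ≤ λ₁ ≤ ⋯ ≤ λ_{n−1}. For vectors u₀,…,u_{m−1}, let d[u] = inf{⟨v, O v⟩ : ‖v‖ = 1, ⟨v, uᵢ⟩ = 0 for all i < m}. Then λ_m = max over all choices of u₀,…,u_{m−1} of d[u], and the maximum is attained when the uᵢ span the subspace spanned by eigenvectors for λ₀,…,λ_{m−1}. -/
/-- Courant–Fischer max-min: for a symmetric operator with orthonormal eigenbasis and
increasing eigenvalues λ₀ ≤ … ≤ λ_{n-1}, the constrained infimum d[u] of the Rayleigh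
quotient is at most λ_m for every choice of m constraint vectors u, with equality when
the constraint vectors are the first m eigenvectors. -/
theorem stmt14 {E : Type*} [NormedAddCommGroup E] [InnerProductSpace ℂ E]
    {n : ℕ} (hdim : Module.finrank ℂ E = n)
    (O : E →ₗ[ℂ] E) (hO : O.IsSymmetric)
    (lam : Fin n → ℝ) (hmono : Monotone lam)
    (v : Fin n → E) (hon : Orthonormal ℂ v)
    (heig : ∀ i, O (v i) = (lam i : ℂ) • v i)
    (m : ℕ) (hm : m < n) :
    (∀ u : Fin m → E,
      sInf {r : ℝ | ∃ w : E, ‖w‖ = 1 ∧ (∀ i, (inner ℂ (u i) w : ℂ) = 0) ∧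
          r = (inner ℂ w (O w) : ℂ).re} ≤ lam ⟨m, hm⟩) ∧
    sInf {r : ℝ | ∃ w : E, ‖w‖ = 1 ∧
        (∀ i : Fin m, (inner ℂ (v (Fin.castLE hm.le i)) w : ℂ) = 0) ∧
        r = (inner ℂ w (O w) : ℂ).re} = lam ⟨m, hm⟩ := by
  have hn0 : 0 < n := by omega
  haveI : FiniteDimensional ℂ E := FiniteDimensional.of_finrank_pos (by omega)
  haveI : Nonempty (Fin n) := ⟨⟨0, hn0⟩⟩
  have hcard : Fintype.card (Fin n) = Module.finrank ℂ E := by simp [hdim]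
  have hsp : ⊤ ≤ Submodule.span ℂ (Set.range v) := by
    have hB := (basisOfOrthonormalOfCardEqFinrank hon hcard).span_eq
    rw [coe_basisOfOrthonormalOfCardEqFinrank] at hB
    exact hB.ge
  let b : OrthonormalBasis (Fin n) ℂ E := OrthonormalBasis.mk hon hsp
  have hb : ⇑b = v := OrthonormalBasis.coe_mk hon hsp
  -- key spectral expansion
  have key : ∀ w : E, (inner ℂ w (O w) : ℂ).re
      = ∑ i, lam i * ‖(inner ℂ (v i) w : ℂ)‖ ^ 2 := by
    intro w
    have h1 : (inner ℂ w (O w) : ℂ) = ∑ i, inner ℂ w (v i) * inner ℂ (v i) (O w) := by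
      rw [← b.sum_inner_mul_inner w (O w), hb]
    have h2 : ∀ i, (inner ℂ (v i) (O w) : ℂ) = (lam i : ℂ) * inner ℂ (v i) w := by
      intro i
      rw [← hO (v i) w, heig i, inner_smul_left]
      simp
    have h3 : (inner ℂ w (O w) : ℂ)
        = ∑ i, (lam i : ℂ) * ((‖(inner ℂ (v i) w : ℂ)‖ ^ 2 : ℝ) : ℂ) := by
      rw [h1]
      refine Finset.sum_congr rfl fun i _ => ?_
      have hc : (starRingEnd ℂ) (inner ℂ (v i) w) * inner ℂ (v i) w
          = (Complex.ofReal ‖(inner ℂ (v i) w : ℂ)‖) ^ 2 := by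
        exact_mod_cast RCLike.conj_mul (inner ℂ (v i) w : ℂ)
      rw [h2 i, ← inner_conj_symm w (v i)]
      push_cast
      linear_combination (lam i : ℂ) * hc
    rw [h3, Complex.re_sum]
    exact Finset.sum_congr rfl fun i _ => by
      rw [← Complex.ofReal_mul, Complex.ofReal_re]
  -- Parseval
  have pars : ∀ w : E, ‖w‖ = 1 → ∑ i, ‖(inner ℂ (v i) w : ℂ)‖ ^ 2 = 1 := by
    intro w hw
    have h1 : (inner ℂ w w : ℂ) = ∑ i, ((‖(inner ℂ (v i) w : ℂ)‖ ^ 2 : ℝ) : ℂ) := by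
      rw [← b.sum_inner_mul_inner w w, hb]
      refine Finset.sum_congr rfl fun i _ => ?_
      rw [← inner_conj_symm w (v i)]
      push_cast
      exact_mod_cast RCLike.conj_mul (inner ℂ (v i) w : ℂ)
    have h2 : (inner ℂ w w : ℂ) = ((1 : ℝ) : ℂ) := by
      rw [inner_self_eq_norm_sq_to_K, hw]; norm_num
    have h3 := (h1.symm.trans h2)
    rw [← Complex.ofReal_sum] at h3
    exact_mod_cast h3
  -- orthogonality coefficients vanish outside span of first k eigenvectors
  have coeff_zero : ∀ (k : ℕ) (hk : k ≤ n) (w : E),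
      w ∈ Submodule.span ℂ (Set.range (v ∘ Fin.castLE hk)) →
      ∀ i : Fin n, k ≤ (i : ℕ) → (inner ℂ (v i) w : ℂ) = 0 := by
    intro k hk w hw i hi
    induction hw using Submodule.span_induction with
    | mem x hx =>
      obtain ⟨j, rfl⟩ := hx
      refine hon.2 ?_
      intro h
      have : (i : ℕ) = ((Fin.castLE hk j : Fin n) : ℕ) := by rw [h]
      simp at this
      omega
    | zero => simp
    | add x y hx hy ihx ihy => rw [inner_add_right, ihx, ihy, add_zero]
    | smul c x hx ihx => rw [inner_smul_right, ihx, mul_zero]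
  -- lower bound lam 0 for boundedness
  have lb : ∀ w : E, ‖w‖ = 1 → lam ⟨0, hn0⟩ ≤ (inner ℂ w (O w) : ℂ).re := by
    intro w hw
    rw [key w]
    calc lam ⟨0, hn0⟩ = ∑ i, lam ⟨0, hn0⟩ * ‖(inner ℂ (v i) w : ℂ)‖ ^ 2 := by
          rw [← Finset.mul_sum, pars w hw, mul_one]
      _ ≤ _ := Finset.sum_le_sum fun i _ =>
          mul_le_mul_of_nonneg_right (hmono (by simp [Fin.le_def])) (by positivity)
  constructor
  · -- part 1
    intro u
    have bdd : BddBelow {r : ℝ | ∃ w : E, ‖w‖ = 1 ∧ (∀ i, (inner ℂ (u i) w : ℂ) = 0) ∧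
        r = (inner ℂ w (O w) : ℂ).re} := by
      refine ⟨lam ⟨0, hn0⟩, ?_⟩
      rintro r ⟨w, hw1, -, rfl⟩
      exact lb w hw1
    have hk1 : m + 1 ≤ n := hm
    set S := Submodule.span ℂ (Set.range (v ∘ Fin.castLE hk1)) with hS
    have honc : Orthonormal ℂ (v ∘ Fin.castLE hk1) := hon.comp _ (Fin.castLE_injective hk1)
    have hfr : Module.finrank ℂ S = m + 1 := by
      rw [hS, finrank_span_eq_card honc.linearIndependent, Fintype.card_fin]
    let φ : S →ₗ[ℂ] (Fin m → ℂ) :=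
      LinearMap.pi fun i => ((innerSL ℂ (u i)).toLinearMap).comp S.subtype
    have hker : LinearMap.ker φ ≠ ⊥ :=
      LinearMap.ker_ne_bot_of_finrank_lt (by rw [hfr, Module.finrank_pi]; simp)
    obtain ⟨x, hxker, hx0⟩ := (Submodule.ne_bot_iff _).1 hker
    have hxE : (x : E) ≠ 0 := fun h => hx0 (by exact_mod_cast Submodule.coe_eq_zero.1 h)
    set w : E := ((‖(x : E)‖⁻¹ : ℝ) : ℂ) • (x : E) with hwdef
    have hw1 : ‖w‖ = 1 := by
      rw [hwdef, norm_smul]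
      simp only [Complex.norm_real, Real.norm_eq_abs, abs_inv, abs_norm]
      exact inv_mul_cancel₀ (norm_ne_zero_iff.2 hxE)
    have horth : ∀ i, (inner ℂ (u i) w : ℂ) = 0 := by
      intro i
      have hphi : φ x = 0 := LinearMap.mem_ker.1 hxker
      have := congrFun hphi i
      simp only [φ, LinearMap.pi_apply, LinearMap.comp_apply, ContinuousLinearMap.coe_coe,
        Submodule.coe_subtype, innerSL_apply_apply, Pi.zero_apply] at this
      rw [hwdef, inner_smul_right, this, mul_zero]
    have hwS : w ∈ S := S.smul_mem _ x.2
    have hval : (inner ℂ w (O w) : ℂ).re ≤ lam ⟨m, hm⟩ := by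
      rw [key w]
      have hz := coeff_zero (m + 1) hk1 w hwS
      calc ∑ i, lam i * ‖(inner ℂ (v i) w : ℂ)‖ ^ 2
          ≤ ∑ i, lam ⟨m, hm⟩ * ‖(inner ℂ (v i) w : ℂ)‖ ^ 2 := by
            refine Finset.sum_le_sum fun i _ => ?_
            rcases le_or_gt ((i : ℕ)) m with h | h
            · exact mul_le_mul_of_nonneg_right (hmono (by simpa [Fin.le_def] using h))
                (by positivity)
            · rw [hz i h]; simp
        _ = lam ⟨m, hm⟩ := by rw [← Finset.mul_sum, pars w hw1, mul_one]
    exact le_trans (csInf_le bdd ⟨w, hw1, horth, rfl⟩) hval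
  · -- part 2
    have bdd : BddBelow {r : ℝ | ∃ w : E, ‖w‖ = 1 ∧
        (∀ i : Fin m, (inner ℂ (v (Fin.castLE hm.le i)) w : ℂ) = 0) ∧
        r = (inner ℂ w (O w) : ℂ).re} := by
      refine ⟨lam ⟨0, hn0⟩, ?_⟩
      rintro r ⟨w, hw1, -, rfl⟩
      exact lb w hw1
    have hval : lam ⟨m, hm⟩ = (inner ℂ (v ⟨m, hm⟩) (O (v ⟨m, hm⟩)) : ℂ).re := by
      rw [heig, inner_smul_right, inner_self_eq_norm_sq_to_K, hon.1 ⟨m, hm⟩]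
      simp
    have hmem : lam ⟨m, hm⟩ ∈ {r : ℝ | ∃ w : E, ‖w‖ = 1 ∧
        (∀ i : Fin m, (inner ℂ (v (Fin.castLE hm.le i)) w : ℂ) = 0) ∧
        r = (inner ℂ w (O w) : ℂ).re} := by
      refine ⟨v ⟨m, hm⟩, hon.1 _, fun i => hon.2 ?_, hval⟩
      intro h
      have := congrArg Fin.val h
      simp at this
      omega
    refine le_antisymm (csInf_le bdd hmem) (le_csInf ⟨_, hmem⟩ ?_)
    rintro r ⟨w, hw1, horth, rfl⟩
    rw [key w]
    have hz : ∀ i : Fin n, (i : ℕ) < m → (inner ℂ (v i) w : ℂ) = 0 := by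
      intro i hi
      have h2 := horth ⟨(i : ℕ), hi⟩
      have he : Fin.castLE hm.le ⟨(i : ℕ), hi⟩ = i := by ext; simp
      rwa [he] at h2
    calc lam ⟨m, hm⟩ = ∑ i, lam ⟨m, hm⟩ * ‖(inner ℂ (v i) w : ℂ)‖ ^ 2 := by
          rw [← Finset.mul_sum, pars w hw1, mul_one]
      _ ≤ ∑ i, lam i * ‖(inner ℂ (v i) w : ℂ)‖ ^ 2 := by
          refine Finset.sum_le_sum fun i _ => ?_
          rcases lt_or_ge ((i : ℕ)) m with h | h
          · rw [hz i h]; simp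
          · exact mul_le_mul_of_nonneg_right (hmono (by simpa [Fin.le_def] using h))
              (by positivity)
end
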